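/- The pivot measure need not be the only minimizer of λ ↦ W_d(μ,λ) + W_d(λ,ν) over intermedium measures: for X = ℝ² with d the l¹ metric, μ = ½(δ_{(0,0)} + δ_{(7,1)}) and ν = ½(δ_{(1,1)} + δ_{(8,0)}), the measure ν itself lies in I(μ,ν) and satisfies W_d(μ,ν) = W_d(μ,ν) + W_d(ν,ν), yet the unique pivot measure is ζ = ½(δ_{(1,0)} + δ_{(8,1)}) ≠ ν. -/

import Mathlib

open MeasureTheory ProbabilityTheory
open scoped ENNReal ProbabilityTheory

noncomputable section

variable {X₁ X₂ Y₁ Y₂ : Type*} [MeasurableSpace X₁] [MeasurableSpace X₂]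
  [MeasurableSpace Y₁] [MeasurableSpace Y₂]

/-- `π` is a transportation plan (coupling) between `μ` and `ν`. -/
def IsCoupling {A B : Type*} [MeasurableSpace A] [MeasurableSpace B]
    (π : Measure (A × B)) (μ : Measure A) (ν : Measure B) : Prop :=
  π.map Prod.fst = μ ∧ π.map Prod.snd = ν

/-- The minimal transportation (Wasserstein) cost for the cost `c`. -/
noncomputable def Wc {A B : Type*} [MeasurableSpace A] [MeasurableSpace B]
    (c : A → B → ℝ≥0∞) (μ : Measure A) (ν : Measure B) : ℝ≥0∞ :=
  ⨅ π ∈ {π : Measure (A × B) | IsCoupling π μ ν}, ∫⁻ p, c p.1 p.2 ∂π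

/-- `(f1, f2)` is a cardinal flow between `μ ∈ P(X₁ × X₂)` and `ν ∈ P(Y₁ × Y₂)`:
the marginal of `f1` on `X = X₁ × X₂` is `μ`, the marginal of `f2` on `Y = Y₁ × Y₂` is `ν`,
and `f1`, `f2` have the same marginal on `Y₁ × X₂`. -/
def IsCardinalFlow (μ : Measure (X₁ × X₂)) (ν : Measure (Y₁ × Y₂))
    (f1 : Measure ((X₁ × X₂) × Y₁)) (f2 : Measure (X₂ × (Y₁ × Y₂))) : Prop :=
  f1.map Prod.fst = μ ∧ f2.map Prod.snd = ν ∧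
    f1.map (fun p => (p.2, p.1.2)) = f2.map (fun p => (p.2.1, p.1))

/-- The set of cardinal flows between `μ` and `ν`. -/
def Flows (μ : Measure (X₁ × X₂)) (ν : Measure (Y₁ × Y₂)) :
    Set (Measure ((X₁ × X₂) × Y₁) × Measure (X₂ × (Y₁ × Y₂))) :=
  {F | IsProbabilityMeasure F.1 ∧ IsProbabilityMeasure F.2 ∧ IsCardinalFlow μ ν F.1 F.2}

/-- The cardinal flow functional `CT(f¹,f²) = ∫ c₁ df¹ + ∫ c₂ df²`. -/
noncomputable def CT (c₁ : X₁ → Y₁ → ℝ≥0∞) (c₂ : X₂ → Y₂ → ℝ≥0∞)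
    (F : Measure ((X₁ × X₂) × Y₁) × Measure (X₂ × (Y₁ × Y₂))) : ℝ≥0∞ :=
  ∫⁻ q, c₁ q.1.1 q.2 ∂F.1 + ∫⁻ q, c₂ q.1 q.2.2 ∂F.2

/-- `ζ` is a pivot measure between `μ` and `ν` for the separable cost `c₁ + c₂`:
some optimal cardinal flow glues on `ζ`. -/
def IsPivot (μ : Measure (X₁ × X₂)) (ν : Measure (Y₁ × Y₂))
    (c₁ : X₁ → Y₁ → ℝ≥0∞) (c₂ : X₂ → Y₂ → ℝ≥0∞) (ζ : Measure (Y₁ × X₂)) : Prop :=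
  ∃ F ∈ Flows μ ν, F.1.map (fun p => (p.2, p.1.2)) = ζ ∧
    CT c₁ c₂ F = ⨅ G ∈ Flows μ ν, CT c₁ c₂ G

/-- 1-Wasserstein distance on `ℝ²` for the `l¹` ground metric. -/
noncomputable def Wl1 (μ ν : Measure (ℝ × ℝ)) : ℝ≥0∞ :=
  Wc (fun x y : ℝ × ℝ => ENNReal.ofReal (|x.1 - y.1| + |x.2 - y.2|)) μ ν

namespace Stmt15Aux
open Set

lemma repr4 {α : Type*} [MeasurableSpace α] [MeasurableSingletonClass α]
    (m : Measure α) (p q r s : α)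
    (hpq : p ≠ q) (hpr : p ≠ r) (hps : p ≠ s) (hqr : q ≠ r) (hqs : q ≠ s) (hrs : r ≠ s)
    (h : m (({p, q, r, s} : Set α)ᶜ) = 0) :
    m = m {p} • Measure.dirac p + m {q} • Measure.dirac q + m {r} • Measure.dirac r
        + m {s} • Measure.dirac s := by
  have hres : Measure.restrict m ({p, q, r, s} : Set α) = m :=
    Measure.restrict_eq_self_of_ae_mem (by rw [ae_iff]; exact h)
  have mq : MeasurableSet ({q} ∪ ({r} ∪ {s}) : Set α) :=
    (measurableSet_singleton q).union ((measurableSet_singleton r).union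
      (measurableSet_singleton s))
  have mr : MeasurableSet ({r} ∪ {s} : Set α) :=
    (measurableSet_singleton r).union (measurableSet_singleton s)
  have h1 : ({p, q, r, s} : Set α) = {p} ∪ ({q} ∪ ({r} ∪ {s})) := by
    simp only [Set.insert_eq]
  conv_lhs => rw [← hres, h1,
    Measure.restrict_union (by simp [Set.disjoint_left, hpq, hpr, hps]) mq,
    Measure.restrict_union (by simp [Set.disjoint_left, hqr, hqs]) mr,
    Measure.restrict_union (by simp [Set.disjoint_left, hrs]) (measurableSet_singleton s),
    Measure.restrict_singleton, Measure.restrict_singleton, Measure.restrict_singleton,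
    Measure.restrict_singleton]
  abel

def μ0 : Measure (ℝ × ℝ) :=
  (2 : ℝ≥0∞)⁻¹ • (Measure.dirac ((0 : ℝ), (0 : ℝ)) + Measure.dirac ((7 : ℝ), (1 : ℝ)))
def ν0 : Measure (ℝ × ℝ) :=
  (2 : ℝ≥0∞)⁻¹ • (Measure.dirac ((1 : ℝ), (1 : ℝ)) + Measure.dirac ((8 : ℝ), (0 : ℝ)))
def ζ0 : Measure (ℝ × ℝ) :=
  (2 : ℝ≥0∞)⁻¹ • (Measure.dirac ((1 : ℝ), (0 : ℝ)) + Measure.dirac ((8 : ℝ), (1 : ℝ)))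
def c0 : ℝ → ℝ → ℝ≥0∞ := fun a b => ENNReal.ofReal |a - b|

lemma m1_meas : Measurable (fun p : (ℝ × ℝ) × ℝ => (p.2, p.1.2)) :=
  measurable_snd.prodMk measurable_fst.snd

lemma m2_meas : Measurable (fun p : ℝ × (ℝ × ℝ) => (p.2.1, p.1)) :=
  measurable_snd.fst.prodMk measurable_fst

/-- Complete analysis of a flow between μ0 and ν0. -/
lemma flow_eq (F : Measure ((ℝ × ℝ) × ℝ) × Measure (ℝ × (ℝ × ℝ))) (hF : F ∈ Flows μ0 ν0) :
    ∃ a b c d : ℝ≥0∞,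
      F.1.map (fun p => (p.2, p.1.2)) =
        a • Measure.dirac ((1:ℝ),(0:ℝ)) + b • Measure.dirac ((1:ℝ),(1:ℝ))
          + c • Measure.dirac ((8:ℝ),(0:ℝ)) + d • Measure.dirac ((8:ℝ),(1:ℝ)) ∧
      a + b = 2⁻¹ ∧ c + d = 2⁻¹ ∧ a + c = 2⁻¹ ∧ b + d = 2⁻¹ ∧
      CT c0 c0 F = 2*a + 6*b + 8*c + 2*d := by
  obtain ⟨hP1, hP2, h1, h2, h3⟩ := hF
  -- marginals of η
  have hfst : (F.1.map (fun p : (ℝ × ℝ) × ℝ => (p.2, p.1.2))).map Prod.fst = (2:ℝ≥0∞)⁻¹ • (Measure.dirac (1:ℝ) + Measure.dirac (8:ℝ)) := by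
    rw [h3, Measure.map_map measurable_fst m2_meas]
    have : (Prod.fst ∘ fun p : ℝ × (ℝ × ℝ) => (p.2.1, p.1)) =
        (Prod.fst ∘ Prod.snd : ℝ × (ℝ × ℝ) → ℝ) := rfl
    rw [this, ← Measure.map_map measurable_fst measurable_snd, h2, ν0,
      Measure.map_smul, Measure.map_add _ _ measurable_fst,
      Measure.map_dirac' measurable_fst, Measure.map_dirac' measurable_fst]
  have hsnd : (F.1.map (fun p : (ℝ × ℝ) × ℝ => (p.2, p.1.2))).map Prod.snd = (2:ℝ≥0∞)⁻¹ • (Measure.dirac (0:ℝ) + Measure.dirac (1:ℝ)) := by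
    rw [Measure.map_map measurable_snd m1_meas]
    have : (Prod.snd ∘ fun p : (ℝ × ℝ) × ℝ => (p.2, p.1.2)) =
        (Prod.snd ∘ Prod.fst : (ℝ × ℝ) × ℝ → ℝ) := rfl
    rw [this, ← Measure.map_map measurable_snd measurable_fst, h1, μ0,
      Measure.map_smul, Measure.map_add _ _ measurable_snd,
      Measure.map_dirac' measurable_snd, Measure.map_dirac' measurable_snd]
  -- η is concentrated on the four points
  have hT : (F.1.map (fun p : (ℝ × ℝ) × ℝ => (p.2, p.1.2))) (({((1:ℝ),(0:ℝ)), (1,1), (8,0), (8,1)} : Set (ℝ × ℝ))ᶜ) = 0 := by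
    have hsub : (({((1:ℝ),(0:ℝ)), (1,1), (8,0), (8,1)} : Set (ℝ × ℝ))ᶜ) ⊆
        (Prod.fst ⁻¹' ({1, 8} : Set ℝ))ᶜ ∪ (Prod.snd ⁻¹' ({0, 1} : Set ℝ))ᶜ := by
      intro x hx
      by_contra hc
      simp only [Set.mem_union, not_or, Set.mem_compl_iff, not_not] at hc
      obtain ⟨ha, hb⟩ := hc
      simp only [Set.mem_preimage, Set.mem_insert_iff, Set.mem_singleton_iff] at ha hb
      apply hx
      rcases ha with ha | ha <;> rcases hb with hb | hb <;>
        simp [Set.mem_insert_iff, Prod.ext_iff, ha, hb]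
    refine measure_mono_null hsub (le_antisymm ?_ zero_le)
    refine le_trans (measure_union_le _ _) ?_
    have e1 : (F.1.map (fun p : (ℝ × ℝ) × ℝ => (p.2, p.1.2))) ((Prod.fst ⁻¹' ({1, 8} : Set ℝ))ᶜ) = 0 := by
      have heq : ((Prod.fst ⁻¹' ({1, 8} : Set ℝ) : Set (ℝ × ℝ)))ᶜ
          = (Prod.fst : ℝ × ℝ → ℝ) ⁻¹' (({1, 8} : Set ℝ)ᶜ) := rfl
      have hm18 : MeasurableSet (({1, 8} : Set ℝ)ᶜ) :=
        ((measurableSet_singleton (8:ℝ)).insert 1).compl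
      rw [heq, ← Measure.map_apply measurable_fst hm18, hfst]
      simp only [Measure.smul_apply, Measure.add_apply, smul_eq_mul]
      rw [Measure.dirac_apply' _ hm18, Measure.dirac_apply' _ hm18]
      simp
    have e2 : (F.1.map (fun p : (ℝ × ℝ) × ℝ => (p.2, p.1.2))) ((Prod.snd ⁻¹' ({0, 1} : Set ℝ))ᶜ) = 0 := by
      have heq : ((Prod.snd ⁻¹' ({0, 1} : Set ℝ) : Set (ℝ × ℝ)))ᶜ
          = (Prod.snd : ℝ × ℝ → ℝ) ⁻¹' (({0, 1} : Set ℝ)ᶜ) := rfl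
      have hm01 : MeasurableSet (({0, 1} : Set ℝ)ᶜ) :=
        ((measurableSet_singleton (1:ℝ)).insert 0).compl
      rw [heq, ← Measure.map_apply measurable_snd hm01, hsnd]
      simp only [Measure.smul_apply, Measure.add_apply, smul_eq_mul]
      rw [Measure.dirac_apply' _ hm01, Measure.dirac_apply' _ hm01]
      simp
    rw [e1, e2]; simp
  -- representation
  have hrep := repr4 (F.1.map (fun p : (ℝ × ℝ) × ℝ => (p.2, p.1.2))) ((1:ℝ),(0:ℝ)) ((1:ℝ),(1:ℝ)) ((8:ℝ),(0:ℝ)) ((8:ℝ),(1:ℝ))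
    (fun h => absurd (congrArg Prod.snd h) (by norm_num))
    (fun h => absurd (congrArg Prod.fst h) (by norm_num))
    (fun h => absurd (congrArg Prod.fst h) (by norm_num))
    (fun h => absurd (congrArg Prod.fst h) (by norm_num))
    (fun h => absurd (congrArg Prod.fst h) (by norm_num))
    (fun h => absurd (congrArg Prod.snd h) (by norm_num)) hT
  rw [hrep] at hfst hsnd
  simp only [Measure.map_add _ _ measurable_fst, Measure.map_add _ _ measurable_snd,
    Measure.map_smul, Measure.map_dirac' measurable_fst, Measure.map_dirac' measurable_snd]
    at hfst hsnd
  have hab : (F.1.map (fun p : (ℝ × ℝ) × ℝ => (p.2, p.1.2))) {((1:ℝ),(0:ℝ))}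
      + (F.1.map (fun p : (ℝ × ℝ) × ℝ => (p.2, p.1.2))) {((1:ℝ),(1:ℝ))} = 2⁻¹ := by
    have h := congrArg (fun m : Measure ℝ => m {(1:ℝ)}) hfst
    simp only [Measure.add_apply, Measure.smul_apply, smul_eq_mul, Measure.dirac_apply,
      Set.indicator_apply, Set.mem_singleton_iff, Pi.one_apply] at h
    norm_num at h
    simpa using h
  have hcd : (F.1.map (fun p : (ℝ × ℝ) × ℝ => (p.2, p.1.2))) {((8:ℝ),(0:ℝ))}
      + (F.1.map (fun p : (ℝ × ℝ) × ℝ => (p.2, p.1.2))) {((8:ℝ),(1:ℝ))} = 2⁻¹ := by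
    have h := congrArg (fun m : Measure ℝ => m {(8:ℝ)}) hfst
    simp only [Measure.add_apply, Measure.smul_apply, smul_eq_mul, Measure.dirac_apply,
      Set.indicator_apply, Set.mem_singleton_iff, Pi.one_apply] at h
    norm_num at h
    simpa using h
  have hac : (F.1.map (fun p : (ℝ × ℝ) × ℝ => (p.2, p.1.2))) {((1:ℝ),(0:ℝ))}
      + (F.1.map (fun p : (ℝ × ℝ) × ℝ => (p.2, p.1.2))) {((8:ℝ),(0:ℝ))} = 2⁻¹ := by
    have h := congrArg (fun m : Measure ℝ => m {(0:ℝ)}) hsnd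
    simp only [Measure.add_apply, Measure.smul_apply, smul_eq_mul, Measure.dirac_apply,
      Set.indicator_apply, Set.mem_singleton_iff, Pi.one_apply] at h
    norm_num at h
    simpa using h
  have hbd : (F.1.map (fun p : (ℝ × ℝ) × ℝ => (p.2, p.1.2))) {((1:ℝ),(1:ℝ))}
      + (F.1.map (fun p : (ℝ × ℝ) × ℝ => (p.2, p.1.2))) {((8:ℝ),(1:ℝ))} = 2⁻¹ := by
    have h := congrArg (fun m : Measure ℝ => m {(1:ℝ)}) hsnd
    simp only [Measure.add_apply, Measure.smul_apply, smul_eq_mul, Measure.dirac_apply,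
      Set.indicator_apply, Set.mem_singleton_iff, Pi.one_apply] at h
    norm_num at h
    simpa using h
  -- cost computation
  have hmeas1 : Measurable (fun y : ℝ × ℝ => ENNReal.ofReal |7 * y.2 - y.1|) := by
    fun_prop
  have hmeas2 : Measurable (fun y : ℝ × ℝ => ENNReal.ofReal |y.2 - (8 - y.1) / 7|) := by
    fun_prop
  have hSμ : ∀ᵐ q ∂F.1, q.1 ∈ ({((0:ℝ),(0:ℝ)), ((7:ℝ),(1:ℝ))} : Set (ℝ × ℝ)) := by
    rw [ae_iff]
    have hSm : MeasurableSet (({((0:ℝ),(0:ℝ)), ((7:ℝ),(1:ℝ))} : Set (ℝ × ℝ))ᶜ) :=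
      ((measurableSet_singleton ((7:ℝ),(1:ℝ))).insert _).compl
    have : {q : (ℝ × ℝ) × ℝ | q.1 ∉ ({((0:ℝ),(0:ℝ)), ((7:ℝ),(1:ℝ))} : Set (ℝ × ℝ))}
        = Prod.fst ⁻¹' (({((0:ℝ),(0:ℝ)), ((7:ℝ),(1:ℝ))} : Set (ℝ × ℝ))ᶜ) := rfl
    rw [this, ← Measure.map_apply measurable_fst hSm, h1, μ0]
    simp only [Measure.smul_apply, Measure.add_apply, smul_eq_mul]
    rw [Measure.dirac_apply' _ hSm, Measure.dirac_apply' _ hSm]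
    simp
  have hSν : ∀ᵐ q ∂F.2, q.2 ∈ ({((1:ℝ),(1:ℝ)), ((8:ℝ),(0:ℝ))} : Set (ℝ × ℝ)) := by
    rw [ae_iff]
    have hSm : MeasurableSet (({((1:ℝ),(1:ℝ)), ((8:ℝ),(0:ℝ))} : Set (ℝ × ℝ))ᶜ) :=
      ((measurableSet_singleton ((8:ℝ),(0:ℝ))).insert _).compl
    have : {q : ℝ × (ℝ × ℝ) | q.2 ∉ ({((1:ℝ),(1:ℝ)), ((8:ℝ),(0:ℝ))} : Set (ℝ × ℝ))}
        = Prod.snd ⁻¹' (({((1:ℝ),(1:ℝ)), ((8:ℝ),(0:ℝ))} : Set (ℝ × ℝ))ᶜ) := rfl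
    rw [this, ← Measure.map_apply measurable_snd hSm, h2, ν0]
    simp only [Measure.smul_apply, Measure.add_apply, smul_eq_mul]
    rw [Measure.dirac_apply' _ hSm, Measure.dirac_apply' _ hSm]
    simp
  have e1 : ∫⁻ q, c0 q.1.1 q.2 ∂F.1
      = ∫⁻ y, ENNReal.ofReal |7 * y.2 - y.1| ∂(F.1.map (fun p : (ℝ × ℝ) × ℝ => (p.2, p.1.2))) := by
    rw [lintegral_map hmeas1 m1_meas]
    refine lintegral_congr_ae (hSμ.mono fun q hq => ?_)
    rcases hq with h | h
    · simp [c0, h]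
    · rw [Set.mem_singleton_iff] at h
      simp [c0, h]
  have e2 : ∫⁻ q, c0 q.1 q.2.2 ∂F.2
      = ∫⁻ y, ENNReal.ofReal |y.2 - (8 - y.1) / 7|
          ∂(F.1.map (fun p : (ℝ × ℝ) × ℝ => (p.2, p.1.2))) := by
    rw [h3, lintegral_map hmeas2 m2_meas]
    refine lintegral_congr_ae (hSν.mono fun q hq => ?_)
    rcases hq with h | h
    · simp [c0, h]
      norm_num
    · rw [Set.mem_singleton_iff] at h
      simp [c0, h]
  refine ⟨_, _, _, _, hrep, hab, hcd, hac, hbd, ?_⟩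
  have hCT : CT c0 c0 F = ∫⁻ q, c0 q.1.1 q.2 ∂F.1 + ∫⁻ q, c0 q.1 q.2.2 ∂F.2 := rfl
  rw [hCT, e1, e2]
  conv_lhs => rw [hrep]
  simp only [lintegral_add_measure, lintegral_smul_measure, lintegral_dirac]
  norm_num
  ring


def F0 : Measure ((ℝ × ℝ) × ℝ) × Measure (ℝ × (ℝ × ℝ)) :=
  ((2:ℝ≥0∞)⁻¹ • (Measure.dirac (((0:ℝ),(0:ℝ)),(1:ℝ)) + Measure.dirac (((7:ℝ),(1:ℝ)),(8:ℝ))),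
   (2:ℝ≥0∞)⁻¹ • (Measure.dirac ((0:ℝ),((1:ℝ),(1:ℝ))) + Measure.dirac ((1:ℝ),((8:ℝ),(0:ℝ)))))

lemma prob_half_add {α : Type*} [MeasurableSpace α] (x y : α) :
    IsProbabilityMeasure ((2:ℝ≥0∞)⁻¹ • (Measure.dirac x + Measure.dirac y)) := by
  constructor
  simp only [Measure.smul_apply, Measure.add_apply, measure_univ, smul_eq_mul]
  rw [one_add_one_eq_two, ENNReal.inv_mul_cancel (by norm_num) (by norm_num)]

lemma hF0 : F0 ∈ Flows μ0 ν0 := by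
  refine ⟨prob_half_add _ _, prob_half_add _ _, ?_, ?_, ?_⟩
  · show (F0.1).map Prod.fst = μ0
    simp only [F0, μ0, Measure.map_smul, Measure.map_add _ _ measurable_fst,
      Measure.map_dirac' measurable_fst]
  · show (F0.2).map Prod.snd = ν0
    simp only [F0, ν0, Measure.map_smul, Measure.map_add _ _ measurable_snd,
      Measure.map_dirac' measurable_snd]
  · show (F0.1).map (fun p => (p.2, p.1.2)) = (F0.2).map (fun p => (p.2.1, p.1))
    simp only [F0, Measure.map_smul, Measure.map_add _ _ m1_meas, Measure.map_add _ _ m2_meas,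
      Measure.map_dirac' m1_meas, Measure.map_dirac' m2_meas]

lemma hmapF0 : (F0.1).map (fun p : (ℝ × ℝ) × ℝ => (p.2, p.1.2)) = ζ0 := by
  simp only [F0, ζ0, Measure.map_smul, Measure.map_add _ _ m1_meas, Measure.map_dirac' m1_meas]

lemma hCT0 : CT c0 c0 F0 = 2 := by
  have : CT c0 c0 F0 = ∫⁻ q, c0 q.1.1 q.2 ∂F0.1 + ∫⁻ q, c0 q.1 q.2.2 ∂F0.2 := rfl
  rw [this]
  simp only [F0, lintegral_smul_measure, lintegral_add_measure, lintegral_dirac, c0]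
  norm_num
  have h21 : (2:ℝ≥0∞)⁻¹ * 2 = 1 := ENNReal.inv_mul_cancel (by norm_num) (by norm_num)
  rw [h21]
  exact one_add_one_eq_two

lemma CT_ge (F : Measure ((ℝ × ℝ) × ℝ) × Measure (ℝ × (ℝ × ℝ))) (hF : F ∈ Flows μ0 ν0) :
    2 ≤ CT c0 c0 F := by
  obtain ⟨a, b, c, d, _, hab, hcd, _, _, hCT⟩ := flow_eq F hF
  rw [hCT]
  have h2 : (2:ℝ≥0∞) * 2⁻¹ = 1 := ENNReal.mul_inv_cancel (by norm_num) (by norm_num)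
  calc (2:ℝ≥0∞) = 2*(a+b) + 2*(c+d) := by rw [hab, hcd, h2]; exact one_add_one_eq_two.symm
  _ = 2*a + 2*b + 2*c + 2*d := by ring
  _ ≤ 2*a + 6*b + 8*c + 2*d := by gcongr <;> norm_num

lemma hinf : (⨅ G ∈ Flows μ0 ν0, CT c0 c0 G) = 2 :=
  le_antisymm (le_trans (iInf₂_le F0 hF0) hCT0.le) (le_iInf₂ CT_ge)

lemma pivot0 : IsPivot μ0 ν0 c0 c0 ζ0 := ⟨F0, hF0, hmapF0, hCT0.trans hinf.symm⟩

lemma pivot_unique (ζ' : Measure (ℝ × ℝ)) (h : IsPivot μ0 ν0 c0 c0 ζ') : ζ' = ζ0 := by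
  obtain ⟨F, hF, hmap, hopt⟩ := h
  obtain ⟨a, b, c, d, hrep, hab, hcd, hac, hbd, hCT⟩ := flow_eq F hF
  rw [hinf, hCT] at hopt
  have h2 : (2:ℝ≥0∞) * 2⁻¹ = 1 := ENNReal.mul_inv_cancel (by norm_num) (by norm_num)
  have hsum : 2*a + 2*b + 2*c + 2*d = 2 := by
    calc 2*a + 2*b + 2*c + 2*d = 2*(a+b) + 2*(c+d) := by ring
    _ = 2 := by rw [hab, hcd, h2]; exact one_add_one_eq_two
  have e : 2*a + 6*b + 8*c + 2*d = (2*a + 2*b + 2*c + 2*d) + (4*b + 6*c) := by ring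
  rw [e, hsum] at hopt
  have h0 : 4*b + 6*c = 0 :=
    (ENNReal.add_right_inj ENNReal.ofNat_ne_top).mp (by rw [hopt, add_zero])
  obtain ⟨h4b, h6c⟩ := add_eq_zero.mp h0
  have hb : b = 0 := by
    rcases mul_eq_zero.mp h4b with h' | h'
    · exact absurd h' (by norm_num)
    · exact h'
  have hc : c = 0 := by
    rcases mul_eq_zero.mp h6c with h' | h'
    · exact absurd h' (by norm_num)
    · exact h'
  have ha : a = 2⁻¹ := by rw [hb, add_zero] at hab; exact hab
  have hd : d = 2⁻¹ := by rw [hb, zero_add] at hbd; exact hbd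
  rw [← hmap, hrep, ha, hb, hc, hd, ζ0]
  simp only [zero_smul, add_zero, smul_add]


lemma Wl1_self_zero : Wl1 ν0 ν0 = 0 := by
  refine le_antisymm ?_ zero_le
  have hdiag : Measurable (fun x : ℝ × ℝ => (x, x)) := measurable_id.prodMk measurable_id
  have hπ : IsCoupling (ν0.map (fun x => (x, x))) ν0 ν0 := by
    constructor
    · rw [Measure.map_map measurable_fst hdiag]
      have : (Prod.fst ∘ fun x : ℝ × ℝ => (x, x)) = id := rfl
      rw [this, Measure.map_id]
    · rw [Measure.map_map measurable_snd hdiag]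
      have : (Prod.snd ∘ fun x : ℝ × ℝ => (x, x)) = id := rfl
      rw [this, Measure.map_id]
  have hle : Wl1 ν0 ν0 ≤ ∫⁻ p : (ℝ × ℝ) × (ℝ × ℝ),
      ENNReal.ofReal (|p.1.1 - p.2.1| + |p.1.2 - p.2.2|) ∂(ν0.map (fun x => (x, x))) :=
    iInf₂_le (ν0.map (fun x => (x, x))) hπ
  refine le_trans hle (le_of_eq ?_)
  rw [lintegral_map (by fun_prop) hdiag]
  simp

lemma marg_snd : ν0.map Prod.snd = μ0.map Prod.snd := by
  simp only [μ0, ν0, Measure.map_smul, Measure.map_add _ _ measurable_snd,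
    Measure.map_dirac' measurable_snd]
  exact congrArg _ (add_comm _ _)

lemma zeta_ne : ζ0 ≠ ν0 := by
  intro h
  have h' := congrArg (fun m : Measure (ℝ × ℝ) => m {((1:ℝ),(0:ℝ))}) h
  simp only [ζ0, ν0, Measure.smul_apply, Measure.add_apply, smul_eq_mul,
    Measure.dirac_apply, Set.indicator_apply, Set.mem_singleton_iff, Pi.one_apply,
    Prod.ext_iff] at h'
  norm_num at h'


end Stmt15Aux

open Stmt15Aux in
theorem stmt15 :
    letI μ : Measure (ℝ × ℝ) :=
      (2 : ℝ≥0∞)⁻¹ • (Measure.dirac ((0 : ℝ), (0 : ℝ)) + Measure.dirac ((7 : ℝ), (1 : ℝ)))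
    letI ν : Measure (ℝ × ℝ) :=
      (2 : ℝ≥0∞)⁻¹ • (Measure.dirac ((1 : ℝ), (1 : ℝ)) + Measure.dirac ((8 : ℝ), (0 : ℝ)))
    letI ζ : Measure (ℝ × ℝ) :=
      (2 : ℝ≥0∞)⁻¹ • (Measure.dirac ((1 : ℝ), (0 : ℝ)) + Measure.dirac ((8 : ℝ), (1 : ℝ)))
    letI c : ℝ → ℝ → ℝ≥0∞ := fun a b => ENNReal.ofReal |a - b|
    -- ν is an intermedium measure between μ and ν
    (ν.map Prod.snd = μ.map Prod.snd ∧ ν.map Prod.fst = ν.map Prod.fst) ∧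
    -- ν minimizes λ ↦ W_d(μ,λ) + W_d(λ,ν)
    Wl1 μ ν = Wl1 μ ν + Wl1 ν ν ∧
    -- yet the unique pivot measure is ζ ≠ ν
    IsPivot μ ν c c ζ ∧ (∀ ζ' : Measure (ℝ × ℝ), IsPivot μ ν c c ζ' → ζ' = ζ) ∧ ζ ≠ ν :=
  ⟨⟨marg_snd, rfl⟩, by show Wl1 μ0 ν0 = Wl1 μ0 ν0 + Wl1 ν0 ν0; rw [Wl1_self_zero, add_zero],
    pivot0, pivot_unique, zeta_ne⟩
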